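/- Let L be a non-degenerate lattice over ℤ_p (p any prime) and v ∈ L with a = ⟨v,v⟩ ∈ ℤ_p^× ∪ 2ℤ_p^×. Then the reflection T(v): w ↦ w − (2⟨v,w⟩/a)v is an automorphism of L, and it induces the trivial automorphism on the discriminant group L^∨/L. -/

import Mathlib

open Matrix

variable {p : ℕ} [Fact p.Prime]

/-- The bilinear form on `ℚ_pⁿ` associated to a Gram matrix `M` over `ℤ_p`. -/
noncomputable def padicForm {n : ℕ} (M : Matrix (Fin n) (Fin n) ℤ_[p])
    (x y : Fin n → ℚ_[p]) : ℚ_[p] :=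
  dotProduct x ((M.map (PadicInt.Coe.ringHom : ℤ_[p] →+* ℚ_[p])).mulVec y)

/-- The lattice `L = ℤ_pⁿ` inside `ℚ_pⁿ`. -/
def padicIntVecs (p n : ℕ) [Fact p.Prime] : Set (Fin n → ℚ_[p]) :=
  {x | ∀ i, ∃ a : ℤ_[p], (a : ℚ_[p]) = x i}

/-- The reflection `T(v) : w ↦ w − (2⟨v,w⟩/⟨v,v⟩)·v` on `ℚ_pⁿ`. -/
noncomputable def padicReflection {n : ℕ} (M : Matrix (Fin n) (Fin n) ℤ_[p])
    (v w : Fin n → ℚ_[p]) : Fin n → ℚ_[p] :=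
  w - (2 * padicForm M v w / padicForm M v v) • v

lemma padicForm_int {n : ℕ} (M : Matrix (Fin n) (Fin n) ℤ_[p]) (v w : Fin n → ℤ_[p]) :
    padicForm M (fun i => (v i : ℚ_[p])) (fun i => (w i : ℚ_[p]))
      = ((dotProduct v (M.mulVec w) : ℤ_[p]) : ℚ_[p]) := by
  have h1 : (M.map (PadicInt.Coe.ringHom : ℤ_[p] →+* ℚ_[p])).mulVec
      (fun i => ((w i : ℚ_[p]))) = fun i => ((M.mulVec w i : ℤ_[p]) : ℚ_[p]) := by
    funext i
    exact (RingHom.map_mulVec (PadicInt.Coe.ringHom) M w i).symm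
  rw [padicForm, h1]
  exact (RingHom.map_dotProduct (PadicInt.Coe.ringHom) v (M.mulVec w)).symm

lemma padicForm_symm {n : ℕ} (M : Matrix (Fin n) (Fin n) ℤ_[p]) (hsymm : M.transpose = M)
    (x y : Fin n → ℚ_[p]) : padicForm M x y = padicForm M y x := by
  have hs : (M.map (PadicInt.Coe.ringHom : ℤ_[p] →+* ℚ_[p])).transpose
      = M.map (PadicInt.Coe.ringHom : ℤ_[p] →+* ℚ_[p]) := by
    rw [← Matrix.transpose_map, hsymm]
  rw [padicForm, padicForm, Matrix.dotProduct_mulVec, ← Matrix.mulVec_transpose, hs,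
    dotProduct_comm]

lemma padicForm_sub_smul_right {n : ℕ} (M : Matrix (Fin n) (Fin n) ℤ_[p])
    (x y z : Fin n → ℚ_[p]) (c : ℚ_[p]) :
    padicForm M x (y - c • z) = padicForm M x y - c * padicForm M x z := by
  simp [padicForm, Matrix.mulVec_sub, Matrix.mulVec_smul, dotProduct_sub, dotProduct_smul,
    smul_eq_mul]

lemma padicForm_sub_smul_left {n : ℕ} (M : Matrix (Fin n) (Fin n) ℤ_[p])
    (x y z : Fin n → ℚ_[p]) (c : ℚ_[p]) :
    padicForm M (x - c • z) y = padicForm M x y - c * padicForm M z y := by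
  simp [padicForm, sub_dotProduct, smul_dotProduct, smul_eq_mul]

/-- Let `L` be a non-degenerate lattice over `ℤ_p` (Gram matrix `M`, symmetric,
`det M ≠ 0`) and `v ∈ L` with `a = ⟨v,v⟩ ∈ ℤ_p^× ∪ 2ℤ_p^×`.  Then the reflection
`T(v) : w ↦ w − (2⟨v,w⟩/a)v` is an automorphism of `L` (it preserves `L`, is an
involution, and preserves the bilinear form), and it induces the trivial
automorphism on the discriminant group `L^∨/L`: for every `w ∈ L^∨` one has
`T(v)w − w ∈ L`. -/
theorem padicReflection_isAutomorphism_and_trivial_on_discriminant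
    {n : ℕ} (M : Matrix (Fin n) (Fin n) ℤ_[p])
    (hsymm : M.transpose = M) (hdet : M.det ≠ 0)
    (v : Fin n → ℤ_[p])
    (ha : IsUnit (dotProduct v (M.mulVec v)) ∨
      ∃ u : ℤ_[p], IsUnit u ∧ dotProduct v (M.mulVec v) = 2 * u) :
    letI vQ : Fin n → ℚ_[p] := fun i => (v i : ℚ_[p])
    (∀ w ∈ padicIntVecs p n, padicReflection M vQ w ∈ padicIntVecs p n) ∧
    (∀ w, padicReflection M vQ (padicReflection M vQ w) = w) ∧
    (∀ w w', padicForm M (padicReflection M vQ w) (padicReflection M vQ w') =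
      padicForm M w w') ∧
    (∀ w : Fin n → ℚ_[p],
      (∀ y ∈ padicIntVecs p n, ∃ c : ℤ_[p], (c : ℚ_[p]) = padicForm M w y) →
      padicReflection M vQ w - w ∈ padicIntVecs p n) := by
  set vQ : Fin n → ℚ_[p] := fun i => (v i : ℚ_[p]) with hvQ
  set a : ℤ_[p] := dotProduct v (M.mulVec v) with ha_def
  have haQ : padicForm M vQ vQ = (a : ℚ_[p]) := padicForm_int M v v
  have ha0 : a ≠ 0 := by
    rcases ha with h | ⟨u, hu, h⟩
    · exact h.ne_zero
    · rw [h]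
      exact mul_ne_zero two_ne_zero hu.ne_zero
  have haQ0 : (a : ℚ_[p]) ≠ 0 := PadicInt.coe_ne_zero.mpr ha0
  have hform0 : padicForm M vQ vQ ≠ 0 := haQ ▸ haQ0
  -- key coefficient lemma
  have hcoef : ∀ t : ℤ_[p], ∃ c : ℤ_[p],
      (c : ℚ_[p]) = 2 * (t : ℚ_[p]) / (a : ℚ_[p]) := by
    intro t
    rcases ha with h | ⟨u, hu, h⟩
    · obtain ⟨b, hb⟩ := isUnit_iff_exists_inv.mp h
      refine ⟨2 * t * b, ?_⟩
      have hb' : (a : ℚ_[p]) * (b : ℚ_[p]) = 1 := by exact_mod_cast congrArg _ hb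
      field_simp
      push_cast
      calc (2 : ℚ_[p]) * t * b * a = 2 * t * (a * b) := by ring
        _ = 2 * t := by rw [hb']; ring
    · obtain ⟨b, hb⟩ := isUnit_iff_exists_inv.mp hu
      refine ⟨t * b, ?_⟩
      have hb' : (u : ℚ_[p]) * (b : ℚ_[p]) = 1 := by exact_mod_cast congrArg _ hb
      have hau : (a : ℚ_[p]) = 2 * (u : ℚ_[p]) := by exact_mod_cast congrArg _ h
      have h2u : (2 : ℚ_[p]) * (u : ℚ_[p]) ≠ 0 :=
        mul_ne_zero two_ne_zero (PadicInt.coe_ne_zero.mpr hu.ne_zero)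
      rw [hau, eq_div_iff h2u]
      push_cast
      calc (t : ℚ_[p]) * b * (2 * u) = 2 * t * (u * b) := by ring
        _ = 2 * t := by rw [hb']; ring
  -- coefficient is integral whenever ⟨v,w⟩ is integral
  have hcoef' : ∀ w : Fin n → ℚ_[p], (∃ t : ℤ_[p], (t : ℚ_[p]) = padicForm M vQ w) →
      ∃ c : ℤ_[p], (c : ℚ_[p]) = 2 * padicForm M vQ w / padicForm M vQ vQ := by
    rintro w ⟨t, ht⟩
    obtain ⟨c, hc⟩ := hcoef t
    exact ⟨c, by rw [hc, ht, haQ]⟩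
  refine ⟨?_, ?_, ?_, ?_⟩
  · -- preserves L
    intro w hw
    choose b hb using hw
    have hwb : w = fun i => (b i : ℚ_[p]) := by funext i; exact (hb i).symm
    obtain ⟨c, hc⟩ := hcoef' w ⟨dotProduct v (M.mulVec b), by rw [hwb]; exact (padicForm_int M v b).symm⟩
    intro i
    refine ⟨b i - c * v i, ?_⟩
    simp only [padicReflection, Pi.sub_apply, Pi.smul_apply, smul_eq_mul]
    push_cast
    rw [hc, hb i]
  · -- involution
    intro w
    have hinner : padicForm M vQ (padicReflection M vQ w) = - padicForm M vQ w := by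
      rw [padicReflection, padicForm_sub_smul_right,
        div_mul_cancel₀ _ hform0]
      ring
    rw [padicReflection, hinner]
    rw [show (2 : ℚ_[p]) * -padicForm M vQ w / padicForm M vQ vQ
        = -(2 * padicForm M vQ w / padicForm M vQ vQ) by ring]
    rw [neg_smul, sub_neg_eq_add, padicReflection, sub_add_cancel]
  · -- preserves the form
    intro w w'
    simp only [padicReflection]
    rw [padicForm_sub_smul_right, padicForm_sub_smul_left, padicForm_sub_smul_left,
      padicForm_symm M hsymm w vQ]
    field_simp
    ring
  · -- trivial on discriminant
    intro w hw
    obtain ⟨t, ht⟩ := hw vQ (fun i => ⟨v i, rfl⟩)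
    obtain ⟨c, hc⟩ := hcoef' w ⟨t, by rw [ht, padicForm_symm M hsymm w vQ]⟩
    intro i
    refine ⟨-(c * v i), ?_⟩
    simp only [padicReflection, Pi.sub_apply, Pi.smul_apply, smul_eq_mul]
    push_cast
    rw [hc]
    ring
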